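/- If Q_Δ ∈ ℝ^{M×M} is lower triangular and M ∈ ℝ^{N×N} is symmetric positive definite, and f is Lipschitz with constant L satisfying Δt·‖Q_Δ‖·L < λ_min(M), then the SDC preconditioner map u ↦ (I_M ⊗ M)u − Δt(Q_Δ ⊗ I_N)F(u) is injective. -/

import Mathlib

open scoped RealInnerProductSpace

/-- If `QΔ` is lower triangular, `Mmat` is symmetric positive definite with
smallest eigenvalue (Rayleigh) bound `lam`, `f` is Lipschitz with constant `L`,
and `Δt * ‖QΔ‖ * L < lam` (with `nQ` the operator 2-norm bound of `QΔ`), then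
the SDC preconditioner map is injective. -/
theorem sdc_preconditioner_injective {M N : ℕ}
    (QΔ : Matrix (Fin M) (Fin M) ℝ) (hQΔlt : ∀ i j : Fin M, i < j → QΔ i j = 0)
    (Mmat : Matrix (Fin N) (Fin N) ℝ) (hMpd : Mmat.PosDef)
    (lam : ℝ) (hlam : 0 < lam)
    (hmin : ∀ v : EuclideanSpace ℝ (Fin N), lam * ‖v‖ ^ 2 ≤ ⟪v, show EuclideanSpace ℝ (Fin N) from WithLp.toLp 2 (Mmat.mulVec v)⟫)
    (f : EuclideanSpace ℝ (Fin N) → EuclideanSpace ℝ (Fin N))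
    (L : ℝ) (hL : 0 ≤ L) (hf : LipschitzWith (Real.toNNReal L) f)
    (nQ : ℝ) (hnQ : 0 ≤ nQ)
    (hQnorm : ∀ v : EuclideanSpace ℝ (Fin M), ‖show EuclideanSpace ℝ (Fin M) from WithLp.toLp 2 (QΔ.mulVec v)‖ ≤ nQ * ‖v‖)
    (Δt : ℝ) (hΔt : 0 ≤ Δt) (hcond : Δt * nQ * L < lam) :
    Function.Injective (fun u : Fin M → EuclideanSpace ℝ (Fin N) =>
      fun m => (show EuclideanSpace ℝ (Fin N) from WithLp.toLp 2 (Mmat.mulVec (u m))) - Δt • ∑ j, QΔ m j • f (u j)) := by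
  -- diagonal entry bound
  have habs : ∀ m : Fin M, |QΔ m m| ≤ nQ := by
    intro m
    have h1 := hQnorm (EuclideanSpace.single m 1)
    have h2 : ⟪(EuclideanSpace.single m 1 : EuclideanSpace ℝ (Fin M)),
        (show EuclideanSpace ℝ (Fin M) from WithLp.toLp 2 (QΔ.mulVec (EuclideanSpace.single m 1)))⟫
        = QΔ m m := by
      rw [EuclideanSpace.inner_single_left]
      simp [Matrix.mulVec, dotProduct, EuclideanSpace.single_apply, mul_comm]
    have h3 : |QΔ m m| ≤ ‖(show EuclideanSpace ℝ (Fin M) from WithLp.toLp 2 (QΔ.mulVec (EuclideanSpace.single m 1)))‖ := by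
      rw [← h2]
      calc |⟪(EuclideanSpace.single m 1 : EuclideanSpace ℝ (Fin M)), _⟫| ≤
          ‖(EuclideanSpace.single m 1 : EuclideanSpace ℝ (Fin M))‖ * ‖_‖ :=
            abs_real_inner_le_norm _ _
        _ = _ := by rw [EuclideanSpace.norm_single]; simp
    have h4 : ‖(EuclideanSpace.single m 1 : EuclideanSpace ℝ (Fin M))‖ = 1 := by
      rw [EuclideanSpace.norm_single]; simp
    rw [h4, mul_one] at h1
    linarith
  intro u v huv
  have key : ∀ m : Fin M,
      (show EuclideanSpace ℝ (Fin N) from WithLp.toLp 2 (Mmat.mulVec (u m))) - Δt • ∑ j, QΔ m j • f (u j)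
      = (show EuclideanSpace ℝ (Fin N) from WithLp.toLp 2 (Mmat.mulVec (v m))) - Δt • ∑ j, QΔ m j • f (v j) := by
    intro m
    exact congrFun huv m
  have main : ∀ n : ℕ, ∀ m : Fin M, (m : ℕ) = n → u m = v m := by
    intro n
    induction n using Nat.strong_induction_on with
    | _ n ih =>
      intro m hm
      have hIH : ∀ j : Fin M, j < m → u j = v j := by
        intro j hj
        exact ih j (by omega) j rfl
      set w : EuclideanSpace ℝ (Fin N) := u m - v m with hw
      have hsum : (∑ j, QΔ m j • f (u j)) - ∑ j, QΔ m j • f (v j)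
          = QΔ m m • (f (u m) - f (v m)) := by
        have hterm : ∀ j : Fin M, j ≠ m → QΔ m j • f (u j) - QΔ m j • f (v j) = 0 := by
          intro j hj
          rcases lt_or_gt_of_ne hj with h | h
          · rw [hIH j h]; simp
          · rw [hQΔlt m j h]; simp
        rw [← Finset.sum_sub_distrib,
          Finset.sum_eq_single_of_mem m (Finset.mem_univ m) (fun j _ hj => hterm j hj), smul_sub]
      have h1 := key m
      rw [sub_eq_sub_iff_sub_eq_sub] at h1
      rw [← smul_sub, hsum] at h1
      have hMw : (show EuclideanSpace ℝ (Fin N) from WithLp.toLp 2 (Mmat.mulVec w))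
          = Δt • QΔ m m • (f (u m) - f (v m)) := by
        have : (show EuclideanSpace ℝ (Fin N) from WithLp.toLp 2 (Mmat.mulVec w))
            = (show EuclideanSpace ℝ (Fin N) from WithLp.toLp 2 (Mmat.mulVec (u m)))
              - (show EuclideanSpace ℝ (Fin N) from WithLp.toLp 2 (Mmat.mulVec (v m))) := by
          simp only [hw, WithLp.ofLp_sub, Matrix.mulVec_sub, WithLp.toLp_sub]
        rw [this, h1]
      have hlow := hmin w
      rw [hMw] at hlow
      have hinner : ⟪w, Δt • QΔ m m • (f (u m) - f (v m))⟫
          = Δt * (QΔ m m * ⟪w, f (u m) - f (v m)⟫) := by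
        rw [real_inner_smul_right, real_inner_smul_right]
      rw [hinner] at hlow
      have hd : ‖f (u m) - f (v m)‖ ≤ L * ‖w‖ := by
        have := hf.dist_le_mul (u m) (v m)
        rw [Real.coe_toNNReal L hL] at this
        simpa [dist_eq_norm, hw] using this
      have hip : |⟪w, f (u m) - f (v m)⟫| ≤ ‖w‖ * ‖f (u m) - f (v m)‖ :=
        abs_real_inner_le_norm _ _
      have hwn : (0:ℝ) ≤ ‖w‖ := norm_nonneg _
      have hdn : (0:ℝ) ≤ ‖f (u m) - f (v m)‖ := norm_nonneg _
      have habsm := habs m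
      have habs' := abs_nonneg (QΔ m m)
      have hb1 := abs_le.mp hip
      have hb2 := abs_le.mp (le_refl |QΔ m m|)
      have hfinal : lam * ‖w‖ ^ 2 ≤ Δt * nQ * L * ‖w‖ ^ 2 := by
        have hq : QΔ m m * ⟪w, f (u m) - f (v m)⟫ ≤ nQ * (L * ‖w‖ ^ 2) := by
          have h5 : QΔ m m * ⟪w, f (u m) - f (v m)⟫ ≤ |QΔ m m| * |⟪w, f (u m) - f (v m)⟫| := by
            calc QΔ m m * ⟪w, f (u m) - f (v m)⟫ ≤ |QΔ m m * ⟪w, f (u m) - f (v m)⟫| := le_abs_self _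
              _ = |QΔ m m| * |⟪w, f (u m) - f (v m)⟫| := abs_mul _ _
          have h6 : |⟪w, f (u m) - f (v m)⟫| ≤ L * ‖w‖ ^ 2 := by
            nlinarith
          have h7 := mul_le_mul habsm h6 (abs_nonneg _) hnQ
          linarith
        calc lam * ‖w‖ ^ 2 ≤ Δt * (QΔ m m * ⟪w, f (u m) - f (v m)⟫) := hlow
          _ ≤ Δt * (nQ * (L * ‖w‖ ^ 2)) := by
              exact mul_le_mul_of_nonneg_left hq hΔt
          _ = Δt * nQ * L * ‖w‖ ^ 2 := by ring
      have h8 : ‖w‖ ^ 2 ≤ 0 := by nlinarith [sq_nonneg ‖w‖]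
      have h9 : ‖w‖ ^ 2 = 0 := le_antisymm h8 (sq_nonneg _)
      have hwz : ‖w‖ = 0 := by
        have := pow_eq_zero_iff (n := 2) (by norm_num) |>.mp h9
        exact this
      have hw0 : w = 0 := norm_eq_zero.mp hwz
      rw [hw] at hw0
      exact sub_eq_zero.mp hw0
  funext m
  exact main m m rfl
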